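/- Let K be a field with non-archimedean absolute value and X = Spec A an affine scheme of finite type over K. For every complete valued field (F,u) extending (K,v), the restriction map of multiplicative seminorms gives a continuous surjective map from (X_F)^an onto X^an. -/

import Mathlib

open TensorProduct

section RealHelpers

private lemma le_of_all_eps {a b : ℝ} (h : ∀ ε : ℝ, 0 < ε → a ≤ b + ε) : a ≤ b := by
  by_contra hb
  push_neg at hb
  have := h ((a - b)/2) (by linarith)
  linarith

private lemma absorb_pow {a M C : ℝ} (hM : 0 < M) (hC : 0 ≤ C)
    (h : ∀ n : ℕ, a ^ (n+1) ≤ C * (n+2) * M ^ (n+1)) : a ≤ M := by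
  by_contra hlt
  push_neg at hlt
  have ha : 0 < a := hM.trans hlt
  set r : ℝ := M / a with hr
  have hr0 : 0 ≤ r := le_of_lt (div_pos hM ha)
  have hr1 : r < 1 := (div_lt_one ha).2 hlt
  have T1 : Filter.Tendsto (fun n : ℕ => (n:ℝ) * r ^ n) Filter.atTop (nhds 0) := by
    simpa using tendsto_pow_const_mul_const_pow_of_lt_one 1 hr0 hr1
  have T2 : Filter.Tendsto (fun n : ℕ => r ^ n) Filter.atTop (nhds 0) :=
    tendsto_pow_atTop_nhds_zero_of_lt_one hr0 hr1
  have T3 : Filter.Tendsto (fun n : ℕ => C * r * ((n:ℝ) * r ^ n) + 2 * C * r * r ^ n)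
      Filter.atTop (nhds 0) := by
    have := ((T1.const_mul (C * r)).add (T2.const_mul (2 * C * r)))
    simpa using this
  have key : ∀ n : ℕ, (1:ℝ) ≤ C * r * ((n:ℝ) * r ^ n) + 2 * C * r * r ^ n := by
    intro n
    have h1 := h n
    have hpow : 0 < a ^ (n+1) := pow_pos ha _
    have : (1:ℝ) ≤ C * (n+2) * M ^ (n+1) / a ^ (n+1) := by
      rw [le_div_iff₀ hpow]
      simpa using h1
    have hMr : M ^ (n+1) / a ^ (n+1) = r ^ (n+1) := by
      rw [hr, div_pow]
    calc (1:ℝ) ≤ C * (n+2) * M ^ (n+1) / a ^ (n+1) := this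
      _ = C * (n+2) * r ^ (n+1) := by rw [mul_div_assoc, hMr]
      _ = C * r * ((n:ℝ) * r ^ n) + 2 * C * r * r ^ n := by ring
  have hev : ∀ᶠ n : ℕ in Filter.atTop,
      C * r * ((n:ℝ) * r ^ n) + 2 * C * r * r ^ n < 1 :=
    T3.eventually_lt_const one_pos
  obtain ⟨n, hn⟩ := hev.exists
  exact absurd (key n) (not_le.2 hn)

end RealHelpers

private lemma le_of_forall_eps_mul {a b c : ℝ} (hb : 0 ≤ b) (hc : 0 ≤ c)
    (h : ∀ ε : ℝ, 0 < ε → a ≤ (b + ε) * (c + ε)) : a ≤ b * c := by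
  apply le_of_all_eps
  intro δ hδ
  set ε : ℝ := min 1 (δ / (b + c + 1)) with hε
  have hε0 : 0 < ε := lt_min one_pos (div_pos hδ (by linarith))
  have hε1 : ε ≤ 1 := min_le_left _ _
  have hε2 : ε ≤ δ / (b + c + 1) := min_le_right _ _
  have h2 : ε * (b + c + 1) ≤ δ := by
    rw [← le_div_iff₀ (by linarith : (0:ℝ) < b + c + 1)]
    exact hε2
  calc a ≤ (b + ε) * (c + ε) := h ε hε0
    _ = b * c + ε * (b + c + ε) := by ring
    _ ≤ b * c + ε * (b + c + 1) := by nlinarith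
    _ ≤ b * c + δ := by linarith

private lemma le_of_forall_eps_pow {a b : ℝ} (k : ℕ)
    (h : ∀ ε : ℝ, 0 < ε → a ≤ (b + ε) ^ k) : a ≤ b ^ k := by
  have ht : Filter.Tendsto (fun ε : ℝ => (b + ε) ^ k) (nhdsWithin 0 (Set.Ioi 0)) (nhds (b ^ k)) := by
    have hcont : Continuous fun ε : ℝ => (b + ε) ^ k := by continuity
    have := hcont.tendsto 0
    simpa using this.mono_left nhdsWithin_le_nhds
  exact ge_of_tendsto ht (by filter_upwards [self_mem_nhdsWithin] with ε hε; exact h ε hε)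

section Abstract

variable {B : Type*} [CommRing B]

/-- auxiliary: a submultiplicative, subadditive seminorm dominated by `P`. -/
def IsGood (P p : B → ℝ) : Prop :=
  (∀ x, 0 ≤ p x) ∧ (∀ x y, p (x * y) ≤ p x * p y) ∧ (∀ x y, p (x + y) ≤ p x + p y) ∧
    p 1 = 1 ∧ ∀ x, p x ≤ P x

namespace IsGood

variable {P p : B → ℝ}

lemma nonneg (hp : IsGood P p) : ∀ x, 0 ≤ p x := hp.1
lemma submul (hp : IsGood P p) : ∀ x y, p (x * y) ≤ p x * p y := hp.2.1
lemma subadd (hp : IsGood P p) : ∀ x y, p (x + y) ≤ p x + p y := hp.2.2.1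
lemma one (hp : IsGood P p) : p 1 = 1 := hp.2.2.2.1
lemma leP (hp : IsGood P p) : ∀ x, p x ≤ P x := hp.2.2.2.2

lemma zero (hp : IsGood P p) (hP0 : P 0 = 0) : p 0 = 0 :=
  le_antisymm (le_trans (hp.leP 0) hP0.le) (hp.nonneg 0)

lemma sum_le (hp : IsGood P p) (hP0 : P 0 = 0) {ι : Type*} (s : Finset ι) (w : ι → B) :
    p (∑ i ∈ s, w i) ≤ ∑ i ∈ s, p (w i) := by
  classical
  induction s using Finset.cons_induction with
  | empty => simpa using (hp.zero hP0).le
  | cons j s hj ih =>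
    rw [Finset.sum_cons, Finset.sum_cons]
    exact le_trans (hp.subadd _ _) (by linarith)

lemma pow_succ_le (hp : IsGood P p) (x : B) : ∀ n : ℕ, p (x ^ (n+1)) ≤ p x ^ (n+1) := by
  intro n
  induction n with
  | zero => simp
  | succ k ih =>
    calc p (x ^ (k+2)) = p (x ^ (k+1) * x) := by rw [← pow_succ]
      _ ≤ p (x ^ (k+1)) * p x := hp.submul _ _
      _ ≤ p x ^ (k+1) * p x := mul_le_mul_of_nonneg_right ih (hp.nonneg x)
      _ = p x ^ (k+2) := by rw [← pow_succ]

end IsGood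

/-- the spectral seminorm attached to `p`. -/
noncomputable def pinf (p : B → ℝ) (x : B) : ℝ := ⨅ n : ℕ, p (x ^ (n+1)) ^ (((n : ℝ)+1)⁻¹)

section pinfFacts

variable {P p : B → ℝ} (hp : IsGood P p)

private lemma rpow_inv_pow {a : ℝ} (ha : 0 ≤ a) (n : ℕ) :
    ((a ^ (((n : ℝ)+1)⁻¹)) : ℝ) ^ (n+1) = a := by
  rw [← Real.rpow_natCast (a ^ (((n : ℝ)+1)⁻¹)) (n+1), ← Real.rpow_mul ha]
  push_cast
  rw [inv_mul_cancel₀ (by positivity : ((n : ℝ)+1) ≠ 0), Real.rpow_one]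

include hp in
private lemma pinf_bdd (x : B) :
    BddBelow (Set.range fun n : ℕ => p (x ^ (n+1)) ^ (((n : ℝ)+1)⁻¹)) := by
  refine ⟨0, ?_⟩
  rintro r ⟨n, rfl⟩
  exact Real.rpow_nonneg (hp.nonneg _) _

include hp in
lemma pinf_nonneg (x : B) : 0 ≤ pinf p x :=
  le_ciInf fun n => Real.rpow_nonneg (hp.nonneg _) _

include hp in
lemma pinf_le (x : B) : pinf p x ≤ p x := by
  have h := ciInf_le (pinf_bdd hp x) 0
  simpa [pinf] using h

include hp in
lemma pinf_pow_le (x : B) (n : ℕ) : pinf p x ^ (n+1) ≤ p (x ^ (n+1)) := by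
  have h1 : pinf p x ≤ p (x ^ (n+1)) ^ (((n : ℝ)+1)⁻¹) := ciInf_le (pinf_bdd hp x) n
  calc pinf p x ^ (n+1) ≤ (p (x ^ (n+1)) ^ (((n : ℝ)+1)⁻¹)) ^ (n+1) :=
        pow_le_pow_left₀ (pinf_nonneg hp x) h1 _
    _ = p (x ^ (n+1)) := rpow_inv_pow (hp.nonneg _) n

include hp in
lemma pinf_key (x : B) {ε : ℝ} (hε : 0 < ε) :
    ∃ D : ℝ, 1 ≤ D ∧ ∀ n : ℕ, p (x ^ n) ≤ D * (pinf p x + ε) ^ n := by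
  classical
  set t := pinf p x with htdef
  have ht0 : 0 ≤ t := pinf_nonneg hp x
  set s := t + ε with hsdef
  have hs : 0 < s := by positivity
  have hlt : (⨅ n : ℕ, p (x ^ (n+1)) ^ (((n : ℝ)+1)⁻¹)) < s := lt_add_of_pos_right _ hε
  obtain ⟨N, hN⟩ := exists_lt_of_ciInf_lt hlt
  have huN : p (x ^ (N+1)) < s ^ (N+1) := by
    have h0 : 0 ≤ p (x ^ (N+1)) ^ (((N : ℝ)+1)⁻¹) := Real.rpow_nonneg (hp.nonneg _) _
    have := pow_lt_pow_left₀ hN h0 (Nat.succ_ne_zero N)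
    rwa [rpow_inv_pow (hp.nonneg _) N] at this
  set D : ℝ := 1 + ∑ r ∈ Finset.range (N+1), p (x ^ r) / s ^ r with hDdef
  have hD1 : 1 ≤ D := by
    have : 0 ≤ ∑ r ∈ Finset.range (N+1), p (x ^ r) / s ^ r :=
      Finset.sum_nonneg fun r _ => div_nonneg (hp.nonneg _) (by positivity)
    rw [hDdef]; linarith
  refine ⟨D, hD1, ?_⟩
  intro n
  induction n using Nat.strong_induction_on with
  | _ n ih =>
    rcases le_or_gt n N with hn | hn
    · have hmem : n ∈ Finset.range (N+1) := Finset.mem_range.2 (by omega)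
      have hterm : p (x ^ n) / s ^ n ≤ D := by
        have hle : p (x ^ n) / s ^ n ≤ ∑ r ∈ Finset.range (N+1), p (x ^ r) / s ^ r :=
          Finset.single_le_sum (fun r _ => div_nonneg (hp.nonneg _) (by positivity)) hmem
        rw [hDdef]; linarith
      calc p (x ^ n) = (p (x ^ n) / s ^ n) * s ^ n := by field_simp
        _ ≤ D * s ^ n := mul_le_mul_of_nonneg_right hterm (by positivity)
    · have hk : n = (N+1) + (n - (N+1)) := by omega
      set k := n - (N+1) with hkdef
      have hkn : k < n := by omega
      have ihk := ih k hkn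
      calc p (x ^ n) = p (x ^ (N+1) * x ^ k) := by rw [← pow_add, ← hk]
        _ ≤ p (x ^ (N+1)) * p (x ^ k) := hp.submul _ _
        _ ≤ s ^ (N+1) * (D * s ^ k) := by
            apply mul_le_mul huN.le ihk (hp.nonneg _) (by positivity)
        _ = D * s ^ n := by rw [hk]; ring
end pinfFacts

section pinfGood

variable {P p : B → ℝ}

lemma pinf_one (hp : IsGood P p) : pinf p 1 = 1 := by
  unfold pinf
  have : ∀ n : ℕ, p ((1:B) ^ (n+1)) ^ (((n : ℝ)+1)⁻¹) = 1 := by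
    intro n; rw [one_pow, hp.one, Real.one_rpow]
  rw [iInf_congr this, ciInf_const]

lemma nat2_fac {C M' : ℝ} (hC : 0 ≤ C) (hM' : 0 ≤ M') (n : ℕ) :
    C * M' ≤ C * ((n:ℝ)+2) * M' := by
  nlinarith [mul_nonneg hC hM', (show (0:ℝ) ≤ (n:ℝ)+1 by positivity)]

lemma pinf_submul (hp : IsGood P p) (x y : B) :
    pinf p (x * y) ≤ pinf p x * pinf p y := by
  have hx0 := pinf_nonneg hp x
  have hy0 := pinf_nonneg hp y
  apply le_of_forall_eps_mul hx0 hy0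
  intro ε hε
  obtain ⟨Dx, hDx1, hDx⟩ := pinf_key hp x hε
  obtain ⟨Dy, hDy1, hDy⟩ := pinf_key hp y hε
  have hM : 0 < (pinf p x + ε) * (pinf p y + ε) := by positivity
  apply absorb_pow hM (by positivity : (0:ℝ) ≤ Dx * Dy)
  intro n
  have h1 : pinf p (x * y) ^ (n+1) ≤ p ((x * y) ^ (n+1)) := pinf_pow_le hp _ n
  have h2 : ((x * y) : B) ^ (n+1) = x ^ (n+1) * y ^ (n+1) := mul_pow x y (n+1)
  have h3 : p (x ^ (n+1) * y ^ (n+1)) ≤ p (x ^ (n+1)) * p (y ^ (n+1)) := hp.submul _ _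
  have h4 : p (x ^ (n+1)) * p (y ^ (n+1)) ≤ (Dx * (pinf p x + ε) ^ (n+1)) * (Dy * (pinf p y + ε) ^ (n+1)) :=
    mul_le_mul (hDx _) (hDy _) (hp.nonneg _) (by positivity)
  have h5 : (Dx * (pinf p x + ε) ^ (n+1)) * (Dy * (pinf p y + ε) ^ (n+1))
      = Dx * Dy * ((pinf p x + ε) * (pinf p y + ε)) ^ (n+1) := by
    rw [mul_pow]; ring
  have hstep : pinf p (x * y) ^ (n+1) ≤ Dx * Dy * ((pinf p x + ε) * (pinf p y + ε)) ^ (n+1) := by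
    rw [h2] at h1
    linarith
  calc pinf p (x * y) ^ (n+1) ≤ Dx * Dy * ((pinf p x + ε) * (pinf p y + ε)) ^ (n+1) := hstep
    _ ≤ Dx * Dy * ((n:ℝ)+2) * ((pinf p x + ε) * (pinf p y + ε)) ^ (n+1) :=
        nat2_fac (by positivity) (by positivity) n

lemma pinf_subadd (hp : IsGood P p) (hP0 : P 0 = 0) (hPnat : ∀ n : ℕ, P ((n : ℕ) : B) ≤ 1)
    (x y : B) : pinf p (x + y) ≤ pinf p x + pinf p y := by
  apply le_of_all_eps
  intro ε hε
  have hε2 : (0:ℝ) < ε/2 := by linarith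
  obtain ⟨Dx, hDx1, hDx⟩ := pinf_key hp x hε2
  obtain ⟨Dy, hDy1, hDy⟩ := pinf_key hp y hε2
  set S : ℝ := pinf p x + pinf p y + ε with hSdef
  have hx0 := pinf_nonneg hp x
  have hy0 := pinf_nonneg hp y
  have hS : 0 < S := by rw [hSdef]; linarith
  apply absorb_pow hS (by positivity : (0:ℝ) ≤ Dx * Dy)
  intro n
  have hsx : pinf p x + ε/2 ≤ S := by rw [hSdef]; linarith
  have hsy : pinf p y + ε/2 ≤ S := by rw [hSdef]; linarith
  have hbinom : ((x + y) : B) ^ (n+1)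
      = ∑ k ∈ Finset.range (n+2), x ^ k * y ^ (n+1-k) * ((n+1).choose k : B) := add_pow x y (n+1)
  have hsum : p ((x + y) ^ (n+1)) ≤ ∑ k ∈ Finset.range (n+2), p (x ^ k * y ^ (n+1-k) * ((n+1).choose k : B)) := by
    rw [hbinom]; exact hp.sum_le hP0 _ _
  have hterm : ∀ k ∈ Finset.range (n+2),
      p (x ^ k * y ^ (n+1-k) * ((n+1).choose k : B)) ≤ Dx * Dy * S ^ (n+1) := by
    intro k hk
    have hkn : k ≤ n+1 := by have := Finset.mem_range.1 hk; omega
    set j : ℕ := n+1-k with hjdef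
    have hkj : k + j = n+1 := by omega
    have hc : p (((n+1).choose k : ℕ) : B) ≤ 1 := le_trans (hp.leP _) (hPnat _)
    have h1 : p (x ^ k * y ^ (n+1-k) * ((n+1).choose k : B)) ≤ p (x ^ k) * p (y ^ (n+1-k)) * p (((n+1).choose k : ℕ) : B) := by
      calc p (x ^ k * y ^ (n+1-k) * ((n+1).choose k : B))
          ≤ p (x ^ k * y ^ (n+1-k)) * p (((n+1).choose k : ℕ) : B) := by
            have := hp.submul (x ^ k * y ^ (n+1-k)) (((n+1).choose k : ℕ) : B)
            simpa using this
        _ ≤ p (x ^ k) * p (y ^ (n+1-k)) * p (((n+1).choose k : ℕ) : B) :=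
            mul_le_mul_of_nonneg_right (hp.submul _ _) (hp.nonneg _)
    have h2 : p (x ^ k) ≤ Dx * (pinf p x + ε/2) ^ k := hDx k
    have h3 : p (y ^ (n+1-k)) ≤ Dy * (pinf p y + ε/2) ^ (n+1-k) := hDy (n+1-k)
    have h4 : (pinf p x + ε/2) ^ k ≤ S ^ k := pow_le_pow_left₀ (by positivity) hsx k
    have h5 : (pinf p y + ε/2) ^ (n+1-k) ≤ S ^ (n+1-k) := pow_le_pow_left₀ (by positivity) hsy _
    have h6 : p (x ^ k) * p (y ^ (n+1-k)) ≤ (Dx * S ^ k) * (Dy * S ^ (n+1-k)) := by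
      apply mul_le_mul (h2.trans (by nlinarith [pow_nonneg (le_of_lt hS) k]))
        (h3.trans (by nlinarith [pow_nonneg (le_of_lt hS) (n+1-k)])) (hp.nonneg _) (by positivity)
    have h7 : (Dx * S ^ k) * (Dy * S ^ j) = Dx * Dy * S ^ (n+1) := by
      rw [← hkj, pow_add]; ring
    calc p (x ^ k * y ^ (n+1-k) * ((n+1).choose k : B))
        ≤ p (x ^ k) * p (y ^ (n+1-k)) * p (((n+1).choose k : ℕ) : B) := h1
      _ ≤ p (x ^ k) * p (y ^ (n+1-k)) * 1 := by
          apply mul_le_mul_of_nonneg_left hc (mul_nonneg (hp.nonneg _) (hp.nonneg _))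
      _ = p (x ^ k) * p (y ^ (n+1-k)) := mul_one _
      _ ≤ (Dx * S ^ k) * (Dy * S ^ j) := h6
      _ = Dx * Dy * S ^ (n+1) := h7
  have hcard : p ((x + y) ^ (n+1)) ≤ ((n:ℝ)+2) * (Dx * Dy * S ^ (n+1)) := by
    have := Finset.sum_le_card_nsmul _ _ _ hterm
    rw [Finset.card_range] at this
    have h8 : ((n+2) : ℕ) • (Dx * Dy * S ^ (n+1)) = ((n:ℝ)+2) * (Dx * Dy * S ^ (n+1)) := by
      rw [nsmul_eq_mul]; push_cast; ring
    calc p ((x + y) ^ (n+1)) ≤ ∑ k ∈ Finset.range (n+2), p (x ^ k * y ^ (n+1-k) * ((n+1).choose k : B)) := hsum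
      _ ≤ ((n+2) : ℕ) • (Dx * Dy * S ^ (n+1)) := this
      _ = ((n:ℝ)+2) * (Dx * Dy * S ^ (n+1)) := h8
  calc pinf p (x + y) ^ (n+1) ≤ p ((x + y) ^ (n+1)) := pinf_pow_le hp _ n
    _ ≤ ((n:ℝ)+2) * (Dx * Dy * S ^ (n+1)) := hcard
    _ = Dx * Dy * ((n:ℝ)+2) * S ^ (n+1) := by ring

lemma pinf_pow_eq (hp : IsGood P p) (x : B) (k : ℕ) :
    pinf p (x ^ (k+1)) = pinf p x ^ (k+1) := by
  have ht0 : 0 ≤ pinf p x := pinf_nonneg hp x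
  apply le_antisymm
  · apply le_of_forall_eps_pow
    intro ε hε
    obtain ⟨D, hD1, hD⟩ := pinf_key hp x hε
    have hM : (0:ℝ) < (pinf p x + ε) ^ (k+1) := by positivity
    apply absorb_pow hM (by linarith : (0:ℝ) ≤ D)
    intro n
    have h1 : pinf p (x ^ (k+1)) ^ (n+1) ≤ p ((x ^ (k+1)) ^ (n+1)) := pinf_pow_le hp _ n
    have h2 : ((x ^ (k+1)) : B) ^ (n+1) = x ^ ((k+1) * (n+1)) := by rw [← pow_mul]
    have h3 : p (x ^ ((k+1)*(n+1))) ≤ D * (pinf p x + ε) ^ ((k+1)*(n+1)) := hD _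
    have h4 : (pinf p x + ε) ^ ((k+1)*(n+1)) = ((pinf p x + ε) ^ (k+1)) ^ (n+1) := by
      rw [← pow_mul]
    have hstep : pinf p (x ^ (k+1)) ^ (n+1) ≤ D * ((pinf p x + ε) ^ (k+1)) ^ (n+1) := by
      rw [h2] at h1; rw [h4] at h3; linarith
    exact le_trans hstep (nat2_fac (by linarith) (by positivity) n)
  · apply le_ciInf
    intro n
    have hm : (k+1) * (n+1) = (k*n+k+n) + 1 := by ring
    have h1 : pinf p x ^ ((k*n+k+n)+1) ≤ p (x ^ ((k*n+k+n)+1)) := pinf_pow_le hp x _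
    have h1' : pinf p x ^ ((k+1)*(n+1)) ≤ p ((x ^ (k+1)) ^ (n+1)) := by
      have e1 : ((x ^ (k+1)) : B) ^ (n+1) = x ^ ((k*n+k+n)+1) := by
        rw [← pow_mul, show (k+1)*(n+1) = k*n+k+n+1 from by ring]
      rw [e1, show (k+1)*(n+1) = (k*n+k+n)+1 from by ring]
      exact h1
    have h2 : (pinf p x ^ ((k+1)*(n+1)) : ℝ) ^ (((n:ℝ)+1)⁻¹) ≤ p ((x ^ (k+1)) ^ (n+1)) ^ (((n:ℝ)+1)⁻¹) :=
      Real.rpow_le_rpow (by positivity) h1' (by positivity)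
    have h3 : (pinf p x ^ ((k+1)*(n+1)) : ℝ) ^ (((n:ℝ)+1)⁻¹) = pinf p x ^ (k+1) := by
      rw [← Real.rpow_natCast (pinf p x) ((k+1)*(n+1)), ← Real.rpow_mul ht0]
      rw [show ((((k+1)*(n+1) : ℕ)) : ℝ) * (((n:ℝ)+1)⁻¹) = ((k:ℝ)+1) by
        push_cast; exact mul_inv_cancel_right₀ (by positivity) _]
      rw [show ((k:ℝ)+1) = (((k+1 : ℕ)) : ℝ) by push_cast; ring, Real.rpow_natCast]
    rw [h3] at h2
    exact h2

end pinfGood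

section ZornPart

variable {P : B → ℝ}

lemma chain_glb (c : Set (B → ℝ)) (hc : IsChain (· ≤ ·) c) (hne : c.Nonempty)
    (hS : ∀ p ∈ c, IsGood P p) :
    IsGood P (fun x => ⨅ p : c, (p : B → ℝ) x) ∧
      ∀ p ∈ c, ∀ x, (⨅ p : c, (p : B → ℝ) x) ≤ p x := by
  haveI : Nonempty c := hne.to_subtype
  set g : B → ℝ := fun x => ⨅ p : c, (p : B → ℝ) x with hgdef
  have hbdd : ∀ x : B, BddBelow (Set.range fun p : c => (p : B → ℝ) x) := by
    intro x
    refine ⟨0, ?_⟩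
    rintro r ⟨p, rfl⟩
    exact (hS p p.2).nonneg x
  have hg_le : ∀ (p) (hp : p ∈ c) (x : B), g x ≤ p x := fun p hp x =>
    ciInf_le (hbdd x) (⟨p, hp⟩ : c)
  have hg_nonneg : ∀ x, 0 ≤ g x := fun x => le_ciInf fun p => (hS p p.2).nonneg x
  have hg_one : g 1 = 1 := by
    rw [hgdef]
    simp only
    rw [iInf_congr (fun p : c => (hS p p.2).one), ciInf_const]
  have hnear : ∀ (x y : B) (ε : ℝ), 0 < ε → ∃ p ∈ c, p x ≤ g x + ε ∧ p y ≤ g y + ε := by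
    intro x y ε hε
    obtain ⟨p₁, hp₁⟩ := exists_lt_of_ciInf_lt (show (⨅ p : c, (p : B → ℝ) x) < g x + ε from
      lt_add_of_pos_right _ hε)
    obtain ⟨p₂, hp₂⟩ := exists_lt_of_ciInf_lt (show (⨅ p : c, (p : B → ℝ) y) < g y + ε from
      lt_add_of_pos_right _ hε)
    rcases eq_or_ne (p₁ : B → ℝ) (p₂ : B → ℝ) with heq | hneq
    · exact ⟨p₁, p₁.2, hp₁.le, by rw [heq]; exact hp₂.le⟩
    · rcases hc.total p₁.2 p₂.2 with h | h
      · exact ⟨p₁, p₁.2, hp₁.le, le_trans (h _) hp₂.le⟩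
      · exact ⟨p₂, p₂.2, le_trans (h _) hp₁.le, hp₂.le⟩
  have hg_submul : ∀ x y, g (x * y) ≤ g x * g y := by
    intro x y
    apply le_of_forall_eps_mul (hg_nonneg x) (hg_nonneg y)
    intro ε hε
    obtain ⟨p, hpc, hpx, hpy⟩ := hnear x y ε hε
    calc g (x * y) ≤ p (x * y) := hg_le p hpc _
      _ ≤ p x * p y := (hS p hpc).submul x y
      _ ≤ (g x + ε) * (g y + ε) :=
          mul_le_mul hpx hpy ((hS p hpc).nonneg y)
            (by linarith [hg_nonneg x] : (0:ℝ) ≤ g x + ε)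
  have hg_subadd : ∀ x y, g (x + y) ≤ g x + g y := by
    intro x y
    apply le_of_all_eps
    intro δ hδ
    obtain ⟨p, hpc, hpx, hpy⟩ := hnear x y (δ/2) (by linarith)
    calc g (x + y) ≤ p (x + y) := hg_le p hpc _
      _ ≤ p x + p y := (hS p hpc).subadd x y
      _ ≤ (g x + δ/2) + (g y + δ/2) := by linarith
      _ = g x + g y + δ := by ring
  have hg_leP : ∀ x, g x ≤ P x := by
    intro x
    obtain ⟨p, hpc⟩ := hne
    exact le_trans (hg_le p hpc x) ((hS p hpc).leP x)
  exact ⟨⟨hg_nonneg, hg_submul, hg_subadd, hg_one, hg_leP⟩, hg_le⟩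

theorem exists_mult_good (P : B → ℝ) (hP : IsGood P P) (hP0 : P 0 = 0)
    (hPnat : ∀ n : ℕ, P ((n : ℕ) : B) ≤ 1) :
    ∃ q : B → ℝ, IsGood P q ∧ (∀ x y, q (x * y) = q x * q y) ∧
      (∀ x y, q (x + y) ≤ max (q x) (q y)) := by
  classical
  -- Zorn, for the reversed (pointwise) order
  set S : Set ((B → ℝ)ᵒᵈ) := {p | IsGood P (OrderDual.ofDual p)} with hSdef
  have hzorn : ∀ c ⊆ S, IsChain (· ≤ ·) c → ∃ ub ∈ S, ∀ z ∈ c, z ≤ ub := by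
    intro c hcS hchain
    rcases c.eq_empty_or_nonempty with rfl | hne
    · exact ⟨OrderDual.toDual P, hP, by simp⟩
    · set c' : Set (B → ℝ) := OrderDual.ofDual '' c with hc'def
      have hc'chain : IsChain (· ≤ ·) c' := by
        rintro _ ⟨z, hz, rfl⟩ _ ⟨w, hw, rfl⟩ hzw
        have hne' : z ≠ w := fun h => hzw (by rw [h])
        rcases hchain hz hw hne' with h | h
        · exact Or.inr h
        · exact Or.inl h
      have hc'ne : c'.Nonempty := hne.image _
      have hc'S : ∀ p ∈ c', IsGood P p := by
        rintro _ ⟨z, hz, rfl⟩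
        exact hcS hz
      obtain ⟨hgood, hle⟩ := chain_glb c' hc'chain hc'ne hc'S
      refine ⟨OrderDual.toDual (fun x => ⨅ p : c', (p : B → ℝ) x), hgood, ?_⟩
      intro z hz
      intro x
      exact hle (OrderDual.ofDual z) ⟨z, hz, rfl⟩ x
  obtain ⟨m, hm⟩ := zorn_le₀ S hzorn
  obtain ⟨hmS, hmax⟩ := hm
  set q : B → ℝ := OrderDual.ofDual m with hqdef
  have hqgood : IsGood P q := hmS
  have heq : ∀ p : B → ℝ, IsGood P p → (∀ x, p x ≤ q x) → p = q := by
    intro p hp hle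
    have h1 : m ≤ OrderDual.toDual p := fun x => hle x
    have h2 := hmax (show OrderDual.toDual p ∈ S from hp) h1
    funext x
    exact le_antisymm (hle x) (h2 x)
  -- q is power-multiplicative
  have hq_pinf : pinf q = q := by
    apply heq
    · exact ⟨fun x => pinf_nonneg hqgood x, pinf_submul hqgood,
        pinf_subadd hqgood hP0 hPnat, pinf_one hqgood,
        fun x => le_trans (pinf_le hqgood x) (hqgood.leP x)⟩
    · exact fun x => pinf_le hqgood x
  have hq_pow : ∀ (x : B) (n : ℕ), q (x ^ (n+1)) = q x ^ (n+1) := by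
    intro x n
    have := pinf_pow_eq hqgood x n
    rw [hq_pinf] at this
    exact this
  -- multiplicativity via the p_g trick
  have hmul : ∀ g x : B, q (x * g) = q x * q g := by
    intro g x
    rcases eq_or_lt_of_le (hqgood.nonneg g) with hg0 | hg
    · -- q g = 0
      have h1 : q (x * g) ≤ q x * q g := hqgood.submul x g
      have h2 : 0 ≤ q (x * g) := hqgood.nonneg _
      rw [← hg0] at h1 ⊢
      have : q x * 0 = 0 := by ring
      rw [this] at h1 ⊢
      linarith
    · set pg : B → ℝ := fun z => ⨅ n : ℕ, q (z * g ^ n) / q g ^ n with hpgdef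
      have hterm_nonneg : ∀ z (n : ℕ), 0 ≤ q (z * g ^ n) / q g ^ n := fun z n =>
        div_nonneg (hqgood.nonneg _) (by positivity)
      have hbdd : ∀ z : B, BddBelow (Set.range fun n : ℕ => q (z * g ^ n) / q g ^ n) := by
        intro z
        exact ⟨0, by rintro r ⟨n, rfl⟩; exact hterm_nonneg z n⟩
      have hanti : ∀ z : B, Antitone (fun n : ℕ => q (z * g ^ n) / q g ^ n) := by
        intro z
        apply antitone_nat_of_succ_le
        intro n
        rw [div_le_div_iff₀ (by positivity) (by positivity)]
        have h1 : q (z * g ^ (n+1)) ≤ q (z * g ^ n) * q g := by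
          have : z * g ^ (n+1) = (z * g ^ n) * g := by ring
          rw [this]
          exact hqgood.submul _ _
        calc q (z * g ^ (n+1)) * q g ^ n ≤ (q (z * g ^ n) * q g) * q g ^ n :=
              mul_le_mul_of_nonneg_right h1 (by positivity)
          _ = q (z * g ^ n) * q g ^ (n+1) := by ring
      have htend : ∀ z : B, Filter.Tendsto (fun n : ℕ => q (z * g ^ n) / q g ^ n)
          Filter.atTop (nhds (pg z)) := fun z => tendsto_atTop_ciInf (hanti z) (hbdd z)
      have hqgpow : ∀ n : ℕ, q (g ^ n) = q g ^ n := by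
        intro n
        cases n with
        | zero => simpa using hqgood.one
        | succ k => exact hq_pow g k
      have hpg_le : ∀ z, pg z ≤ q z := by
        intro z
        have h0 := ciInf_le (hbdd z) 0
        simpa using h0
      have hpg_one : pg 1 = 1 := by
        rw [hpgdef]
        simp only
        have : ∀ n : ℕ, q ((1:B) * g ^ n) / q g ^ n = 1 := by
          intro n
          rw [one_mul, hqgpow n, div_self (by positivity)]
        rw [iInf_congr this, ciInf_const]
      have hpg_nonneg : ∀ z, 0 ≤ pg z := fun z => le_ciInf (hterm_nonneg z)
      have hpg_submul : ∀ x' y', pg (x' * y') ≤ pg x' * pg y' := by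
        intro x' y'
        have hub : ∀ n : ℕ, pg (x' * y') ≤
            (q (x' * g ^ n) / q g ^ n) * (q (y' * g ^ n) / q g ^ n) := by
          intro n
          have h1 : pg (x' * y') ≤ q ((x' * y') * g ^ (2*n)) / q g ^ (2*n) :=
            ciInf_le (hbdd _) (2*n)
          have h2 : (x' * y') * g ^ (2*n) = (x' * g ^ n) * (y' * g ^ n) := by
            rw [two_mul, pow_add]; ring
          have h3 : q ((x' * y') * g ^ (2*n)) ≤ q (x' * g ^ n) * q (y' * g ^ n) := by
            rw [h2]; exact hqgood.submul _ _
          have h4 : q g ^ (2*n) = q g ^ n * q g ^ n := by rw [two_mul, pow_add]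
          calc pg (x' * y') ≤ q ((x' * y') * g ^ (2*n)) / q g ^ (2*n) := h1
            _ ≤ (q (x' * g ^ n) * q (y' * g ^ n)) / q g ^ (2*n) :=
                (div_le_div_iff_of_pos_right (pow_pos hg (2*n))).2 h3
            _ = (q (x' * g ^ n) / q g ^ n) * (q (y' * g ^ n) / q g ^ n) := by
                rw [div_mul_div_comm, h4]
        have hlim : Filter.Tendsto (fun n : ℕ =>
            (q (x' * g ^ n) / q g ^ n) * (q (y' * g ^ n) / q g ^ n))
            Filter.atTop (nhds (pg x' * pg y')) := (htend x').mul (htend y')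
        exact ge_of_tendsto hlim (Filter.Eventually.of_forall hub)
      have hpg_subadd : ∀ x' y', pg (x' + y') ≤ pg x' + pg y' := by
        intro x' y'
        have hub : ∀ n : ℕ, pg (x' + y') ≤
            q (x' * g ^ n) / q g ^ n + q (y' * g ^ n) / q g ^ n := by
          intro n
          have h1 : pg (x' + y') ≤ q ((x' + y') * g ^ n) / q g ^ n := ciInf_le (hbdd _) n
          have h2 : (x' + y') * g ^ n = x' * g ^ n + y' * g ^ n := by ring
          have h3 : q ((x' + y') * g ^ n) ≤ q (x' * g ^ n) + q (y' * g ^ n) := by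
            rw [h2]; exact hqgood.subadd _ _
          calc pg (x' + y') ≤ q ((x' + y') * g ^ n) / q g ^ n := h1
            _ ≤ (q (x' * g ^ n) + q (y' * g ^ n)) / q g ^ n :=
                (div_le_div_iff_of_pos_right (pow_pos hg n)).2 h3
            _ = q (x' * g ^ n) / q g ^ n + q (y' * g ^ n) / q g ^ n := add_div _ _ _
        have hlim : Filter.Tendsto (fun n : ℕ =>
            q (x' * g ^ n) / q g ^ n + q (y' * g ^ n) / q g ^ n)
            Filter.atTop (nhds (pg x' + pg y')) := (htend x').add (htend y')
        exact ge_of_tendsto hlim (Filter.Eventually.of_forall hub)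
      have hpg_good : IsGood P pg :=
        ⟨hpg_nonneg, hpg_submul, hpg_subadd, hpg_one,
          fun z => le_trans (hpg_le z) (hqgood.leP z)⟩
      have hpg_eq : pg = q := heq pg hpg_good hpg_le
      have h1 : q x ≤ q (x * g) / q g := by
        have h0 : pg x ≤ q (x * g ^ 1) / q g ^ 1 := ciInf_le (hbdd x) 1
        rw [pow_one, pow_one] at h0
        rw [← congrFun hpg_eq x]
        exact h0
      have h2 : q x * q g ≤ q (x * g) := by
        rw [← le_div_iff₀ hg]
        exact h1
      exact le_antisymm (hqgood.submul x g) h2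
  -- ultrametric inequality
  have hq_natle : ∀ n : ℕ, q ((n : ℕ) : B) ≤ 1 := fun n => le_trans (hqgood.leP _) (hPnat n)
  have hultra : ∀ x y, q (x + y) ≤ max (q x) (q y) := by
    intro x y
    set M : ℝ := max (q x) (q y) with hMdef
    have hM0 : 0 ≤ M := le_trans (hqgood.nonneg x) (le_max_left _ _)
    rcases eq_or_lt_of_le hM0 with hM | hM
    · -- both are zero
      have hx : q x = 0 := le_antisymm (le_trans (le_max_left (q x) (q y)) hM.symm.le) (hqgood.nonneg x)
      have hy : q y = 0 := le_antisymm (le_trans (le_max_right (q x) (q y)) hM.symm.le) (hqgood.nonneg y)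
      have := hqgood.subadd x y
      rw [hx, hy] at this
      calc q (x + y) ≤ 0 + 0 := this
        _ ≤ M := by rw [add_zero]; exact hM0
    · apply absorb_pow hM (zero_le_one' ℝ)
      intro n
      have hqpow : ∀ (z : B) (m : ℕ), q (z ^ m) = q z ^ m := by
        intro z m
        induction m with
        | zero => simpa using hqgood.one
        | succ k ih => rw [pow_succ, pow_succ, hmul, ih]
      have hbinom : ((x + y) : B) ^ (n+1)
          = ∑ k ∈ Finset.range (n+2), x ^ k * y ^ (n+1-k) * ((n+1).choose k : B) := add_pow x y (n+1)
      have hsum : q ((x + y) ^ (n+1)) ≤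
          ∑ k ∈ Finset.range (n+2), q (x ^ k * y ^ (n+1-k) * ((n+1).choose k : B)) := by
        rw [hbinom]; exact hqgood.sum_le hP0 _ _
      have hterm : ∀ k ∈ Finset.range (n+2),
          q (x ^ k * y ^ (n+1-k) * ((n+1).choose k : B)) ≤ M ^ (n+1) := by
        intro k hk
        have hkn : k ≤ n+1 := by have := Finset.mem_range.1 hk; omega
        set j : ℕ := n+1-k with hjdef
        have hkj : k + j = n+1 := by omega
        have h1 : q (x ^ k * y ^ j * ((n+1).choose k : B))
            = q x ^ k * q y ^ j * q (((n+1).choose k : ℕ) : B) := by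
          rw [hmul, hmul, hqpow, hqpow]
        have h2 : q x ^ k ≤ M ^ k := pow_le_pow_left₀ (hqgood.nonneg x) (le_max_left _ _) k
        have h3 : q y ^ j ≤ M ^ j := pow_le_pow_left₀ (hqgood.nonneg y) (le_max_right _ _) j
        calc q (x ^ k * y ^ j * ((n+1).choose k : B))
            = q x ^ k * q y ^ j * q (((n+1).choose k : ℕ) : B) := h1
          _ ≤ q x ^ k * q y ^ j * 1 :=
              mul_le_mul_of_nonneg_left (hq_natle _)
                (mul_nonneg (pow_nonneg (hqgood.nonneg x) k) (pow_nonneg (hqgood.nonneg y) j))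
          _ = q x ^ k * q y ^ j := mul_one _
          _ ≤ M ^ k * M ^ j :=
              mul_le_mul h2 h3 (pow_nonneg (hqgood.nonneg y) j) (pow_nonneg hM0 k)
          _ = M ^ (n+1) := by rw [← pow_add, hkj]
      have hcard : q ((x + y) ^ (n+1)) ≤ ((n:ℝ)+2) * M ^ (n+1) := by
        have := Finset.sum_le_card_nsmul _ _ _ hterm
        rw [Finset.card_range] at this
        have h8 : ((n+2) : ℕ) • (M ^ (n+1)) = ((n:ℝ)+2) * M ^ (n+1) := by
          rw [nsmul_eq_mul]; push_cast; ring
        calc q ((x + y) ^ (n+1)) ≤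
            ∑ k ∈ Finset.range (n+2), q (x ^ k * y ^ (n+1-k) * ((n+1).choose k : B)) := hsum
          _ ≤ ((n+2) : ℕ) • (M ^ (n+1)) := this
          _ = ((n:ℝ)+2) * M ^ (n+1) := h8
      calc q (x + y) ^ (n+1) = q ((x + y) ^ (n+1)) := (hqpow (x+y) (n+1)).symm
        _ ≤ ((n:ℝ)+2) * M ^ (n+1) := hcard
        _ = 1 * ((n:ℝ)+2) * M ^ (n+1) := by ring
  exact ⟨q, hqgood, fun x y => hmul y x, hultra⟩

end ZornPart

end Abstract
section TensorPart

variable {K F L : Type*} [Field K] [Field F] [Algebra K F] [Field L] [Algebra K L]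

theorem tensor_exists (absK : K → ℝ) (absF : F → ℝ) (v : L → ℝ)
    (hK_nonneg : ∀ α, 0 ≤ absK α) (hK_zero : ∀ α : K, absK α = 0 ↔ α = 0)
    (hK_mul : ∀ α β, absK (α * β) = absK α * absK β)
    (hF_nonneg : ∀ α, 0 ≤ absF α) (hF_zero : ∀ α : F, absF α = 0 ↔ α = 0)
    (hF_mul : ∀ α β, absF (α * β) = absF α * absF β)
    (hF_add : ∀ α β, absF (α + β) ≤ max (absF α) (absF β))
    (hext : ∀ α : K, absF (algebraMap K F α) = absK α)
    (hv_nonneg : ∀ x, 0 ≤ v x) (hv_zero : ∀ x : L, v x = 0 ↔ x = 0)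
    (hv_mul : ∀ x y, v (x * y) = v x * v y)
    (hv_add : ∀ x y, v (x + y) ≤ max (v x) (v y))
    (hv_algK : ∀ α : K, v (algebraMap K L α) = absK α) :
    ∃ Q : F ⊗[K] L → ℝ, (∀ x, 0 ≤ Q x) ∧ (∀ x y, Q (x * y) = Q x * Q y) ∧
      (∀ x y, Q (x + y) ≤ max (Q x) (Q y)) ∧
      (∀ f : F, Q (f ⊗ₜ[K] (1:L)) = absF f) ∧ (∀ y : L, Q ((1:F) ⊗ₜ[K] y) = v y) := by
  classical
  -- basic facts
  have habsF1 : absF 1 = 1 := by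
    have h := hF_mul 1 1
    rw [mul_one] at h
    have h0 : absF 1 ≠ 0 := fun h' => one_ne_zero ((hF_zero 1).1 h')
    field_simp at h
    tauto
  have habsK1 : absK 1 = 1 := by
    have := hext 1
    rw [map_one, habsF1] at this
    exact this.symm
  have habsF0 : absF 0 = 0 := (hF_zero 0).2 rfl
  have hv_one : v 1 = 1 := by
    have := hv_algK 1
    rw [map_one, habsK1] at this
    exact this
  have hv0 : v 0 = 0 := (hv_zero 0).2 rfl
  have habsK_div : ∀ (α β : K), β ≠ 0 → absK (α / β) = absK α / absK β := by
    intro α β hβ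
    have hβ0 : absK β ≠ 0 := fun h => hβ ((hK_zero β).1 h)
    have := hK_mul (α / β) β
    rw [div_mul_cancel₀ _ hβ] at this
    field_simp [this]
    exact this.symm
  have habsF_inv : ∀ f : F, f ≠ 0 → absF f⁻¹ = (absF f)⁻¹ := by
    intro f hf
    have := hF_mul f f⁻¹
    rw [mul_inv_cancel₀ hf, habsF1] at this
    exact (inv_eq_of_mul_eq_one_right this.symm).symm
  have habsF_sub : ∀ x y : F, absF (x - y) ≤ max (absF x) (absF y) := by
    intro x y
    have hneg : absF (-y) = absF y := by
      have h1 : absF (-1 : F) = 1 := by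
        have h := hF_mul (-1) (-1)
        rw [neg_one_mul, neg_neg, habsF1] at h
        have h0 : 0 ≤ absF (-1) := hF_nonneg _
        nlinarith
      have := hF_mul (-1) y
      rw [neg_one_mul, h1, one_mul] at this
      exact this
    have := hF_add x (-y)
    rw [hneg] at this
    simpa [sub_eq_add_neg] using this
  have habsF_nat : ∀ n : ℕ, absF ((n : ℕ) : F) ≤ 1 := by
    intro n
    induction n with
    | zero => simp [habsF0]
    | succ m ih =>
      push_cast
      refine le_trans (hF_add _ _) (max_le ?_ ?_)
      · push_cast at ih; exact ih
      · rw [habsF1]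
  have hv_smulK : ∀ (k : K) (y : L), v (k • y) = absK k * v y := by
    intro k y
    rw [Algebra.smul_def, hv_mul, hv_algK]
  -- ultrametric sum bound for v
  have hv_sum : ∀ (n : ℕ) (w : Fin n → L) (c : ℝ), 0 ≤ c → (∀ i, v (w i) ≤ c) →
      v (∑ i, w i) ≤ c := by
    intro n
    induction n with
    | zero => intro w c hc _; simpa [hv0] using hc
    | succ m ih =>
      intro w c hc hw
      rw [Fin.sum_univ_succ]
      exact le_trans (hv_add _ _) (max_le (hw 0) (ih _ c hc fun i => hw i.succ))
  -- base change preserves linear independence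
  have hbase : ∀ (n : ℕ) (a : Fin n → L), LinearIndependent K a →
      LinearIndependent F (fun i => ((1:F) ⊗ₜ[K] a i : F ⊗[K] L)) := by
    intro n a ha
    have hinj : Function.Injective a := ha.injective
    have hsub : LinearIndepOn K id (Set.range a) := (linearIndepOn_id_range_iff hinj).2 ha
    let bb := Module.Basis.extend hsub
    let e : Fin n → ↥(hsub.extend (Set.subset_univ (Set.range a))) := fun i =>
      ⟨a i, hsub.subset_extend _ ⟨i, rfl⟩⟩
    have he : Function.Injective e := fun i j h => hinj (by
      have := congrArg Subtype.val h
      simpa using this)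
    have hbe : ∀ i, (Module.Basis.baseChange F bb) (e i) = (1:F) ⊗ₜ[K] a i := by
      intro i
      rw [Module.Basis.baseChange_apply]
      congr 1
      exact Module.Basis.extend_apply_self hsub (e i)
    have hli := (Module.Basis.baseChange F bb).linearIndependent.comp e he
    have heq : (fun i => ((1:F) ⊗ₜ[K] a i : F ⊗[K] L)) = (Module.Basis.baseChange F bb) ∘ e :=
      funext fun i => (hbe i).symm
    rw [heq]
    exact hli
  -- the elimination lemma
  have helim : ∀ (n : ℕ) (f : Fin n → F) (a : Fin n → L),
      (∑ i, f i ⊗ₜ[K] a i) = (1 : F ⊗[K] L) → ∃ i, 1 ≤ absF (f i) * v (a i) := by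
    intro n
    induction n using Nat.strong_induction_on with
    | _ n IH =>
    intro f a hsum
    rcases n with - | n'
    · exfalso
      rw [show (∑ i : Fin 0, f i ⊗ₜ[K] a i) = 0 from by simp] at hsum
      exact one_ne_zero hsum.symm
    by_cases hz : ∃ i, f i = 0 ∨ a i = 0
    · obtain ⟨i₀, hi₀⟩ := hz
      have hterm0 : f i₀ ⊗ₜ[K] a i₀ = 0 := by
        rcases hi₀ with h | h <;> simp [h]
      rw [Fin.sum_univ_succAbove (fun i => f i ⊗ₜ[K] a i) i₀, hterm0, zero_add] at hsum
      obtain ⟨j, hj⟩ := IH n' (by omega) _ _ hsum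
      exact ⟨i₀.succAbove j, hj⟩
    · push_neg at hz
      by_cases hli : LinearIndependent K a
      · by_cases h1 : (1:L) ∈ Submodule.span K (Set.range a)
        · obtain ⟨k, hk⟩ := (Submodule.mem_span_range_iff_exists_fun K).1 h1
          have hzero : ∑ i, (f i - algebraMap K F (k i)) • ((1:F) ⊗ₜ[K] a i)
              = (0 : F ⊗[K] L) := by
            have e1 : ∀ i : Fin (n'+1), (f i - algebraMap K F (k i)) • ((1:F) ⊗ₜ[K] a i)
                = f i ⊗ₜ[K] a i - (algebraMap K F (k i)) ⊗ₜ[K] a i := by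
              intro i
              rw [sub_smul]
              congr 1 <;> rw [TensorProduct.smul_tmul', smul_eq_mul, mul_one]
            rw [Finset.sum_congr rfl (fun i _ => e1 i), Finset.sum_sub_distrib]
            have e2 : ∀ i : Fin (n'+1), (algebraMap K F (k i)) ⊗ₜ[K] a i
                = (1:F) ⊗ₜ[K] (k i • a i) := by
              intro i
              rw [Algebra.algebraMap_eq_smul_one, TensorProduct.smul_tmul]
            rw [Finset.sum_congr rfl (fun i _ => e2 i), ← TensorProduct.tmul_sum, hk, hsum,
              ← Algebra.TensorProduct.one_def, sub_self]
          have hall := (Fintype.linearIndependent_iff.1 (hbase _ a hli)) _ hzero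
          have hfi : ∀ i, f i = algebraMap K F (k i) := by
            intro i
            have := hall i
            rwa [sub_eq_zero] at this
          have hne : (Finset.univ : Finset (Fin (n'+1))).Nonempty := Finset.univ_nonempty
          have hc0 : 0 ≤ Finset.univ.sup' hne (fun i => absK (k i) * v (a i)) :=
            le_trans (mul_nonneg (hK_nonneg (k 0)) (hv_nonneg (a 0)))
              (Finset.le_sup' (fun i => absK (k i) * v (a i)) (Finset.mem_univ (0 : Fin (n'+1))))
          have hc1 : (1:ℝ) ≤ Finset.univ.sup' hne (fun i => absK (k i) * v (a i)) := by
            have hb : v (∑ i, k i • a i) ≤ Finset.univ.sup' hne (fun i => absK (k i) * v (a i)) := by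
              apply hv_sum _ _ _ hc0
              intro i
              rw [hv_smulK]
              exact Finset.le_sup' (fun i => absK (k i) * v (a i)) (Finset.mem_univ i)
            rw [hk, hv_one] at hb
            exact hb
          obtain ⟨i, -, hieq⟩ := Finset.exists_mem_eq_sup' hne (fun i => absK (k i) * v (a i))
          refine ⟨i, ?_⟩
          rw [hfi i, hext (k i)]
          rw [hieq] at hc1
          exact hc1
        · exfalso
          have hli' : LinearIndependent K (Fin.cons (1:L) a) :=
            linearIndependent_fin_cons.2 ⟨hli, h1⟩
          have hzero : ∑ i : Fin (n'+2),
              ((Fin.cons (-1 : F) f : Fin (n'+2) → F) i) •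
                ((1:F) ⊗ₜ[K] ((Fin.cons (1:L) a : Fin (n'+2) → L) i))
              = (0 : F ⊗[K] L) := by
            rw [Fin.sum_univ_succ]
            simp only [Fin.cons_zero, Fin.cons_succ]
            have e3 : ∀ i : Fin (n'+1), f i • ((1:F) ⊗ₜ[K] a i) = f i ⊗ₜ[K] a i := by
              intro i
              rw [TensorProduct.smul_tmul', smul_eq_mul, mul_one]
            rw [Finset.sum_congr rfl (fun i _ => e3 i), hsum, ← Algebra.TensorProduct.one_def]
            simp
          have hall := (Fintype.linearIndependent_iff.1 (hbase _ _ hli')) _ hzero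
          have h0 := hall 0
          rw [Fin.cons_zero, neg_eq_zero] at h0
          exact one_ne_zero h0
      · obtain ⟨g, hg0, i₁, hi₁⟩ := Fintype.not_linearIndependent_iff.1 hli
        obtain ⟨i₀, -, hmax⟩ := Finset.exists_max_image Finset.univ
          (fun i => absK (g i) * v (a i)) ⟨i₁, Finset.mem_univ i₁⟩
        have hvpos : ∀ i, 0 < v (a i) := fun i =>
          lt_of_le_of_ne (hv_nonneg _) (fun h => (hz i).2 ((hv_zero _).1 h.symm))
        have ht₁ : 0 < absK (g i₁) * v (a i₁) :=
          mul_pos (lt_of_le_of_ne (hK_nonneg _) (fun h => hi₁ ((hK_zero _).1 h.symm))) (hvpos i₁)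
        have ht₀ : 0 < absK (g i₀) * v (a i₀) := lt_of_lt_of_le ht₁ (hmax i₁ (Finset.mem_univ i₁))
        have hg₀ : g i₀ ≠ 0 := by
          intro h
          rw [h, (hK_zero 0).2 rfl, zero_mul] at ht₀
          exact lt_irrefl 0 ht₀
        set f' : Fin n' → F := fun j =>
          f (i₀.succAbove j) - f i₀ * algebraMap K F (g (i₀.succAbove j) / g i₀) with hf'def
        set a' : Fin n' → L := fun j => a (i₀.succAbove j) with ha'def
        have hsum' : (∑ j, f' j ⊗ₜ[K] a' j) = (1 : F ⊗[K] L) := by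
          have hrest : (∑ j : Fin n', f (i₀.succAbove j) ⊗ₜ[K] a (i₀.succAbove j))
              = 1 - f i₀ ⊗ₜ[K] a i₀ := by
            rw [Fin.sum_univ_succAbove (fun i => f i ⊗ₜ[K] a i) i₀] at hsum
            linear_combination (norm := abel) hsum
          have hsplit : ∀ j : Fin n', f' j ⊗ₜ[K] a' j
              = f (i₀.succAbove j) ⊗ₜ[K] a (i₀.succAbove j)
                - f i₀ ⊗ₜ[K] ((g (i₀.succAbove j) / g i₀) • a (i₀.succAbove j)) := by
            intro j
            rw [hf'def, ha'def]
            simp only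
            rw [sub_tmul]
            congr 1
            rw [show f i₀ * algebraMap K F (g (i₀.succAbove j) / g i₀)
              = (g (i₀.succAbove j) / g i₀) • f i₀ from by
                rw [Algebra.smul_def]; ring]
            rw [TensorProduct.smul_tmul]
          rw [Finset.sum_congr rfl (fun j _ => hsplit j), Finset.sum_sub_distrib, hrest,
            ← TensorProduct.tmul_sum]
          have hinner : (∑ j : Fin n', (g (i₀.succAbove j) / g i₀) • a (i₀.succAbove j))
              = - a i₀ := by
            have e4 : ∀ j : Fin n', (g (i₀.succAbove j) / g i₀) • a (i₀.succAbove j)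
                = (g i₀)⁻¹ • (g (i₀.succAbove j) • a (i₀.succAbove j)) := by
              intro j
              rw [smul_smul, div_eq_inv_mul]
            rw [Finset.sum_congr rfl (fun j _ => e4 j), ← Finset.smul_sum]
            have e5 : (∑ j : Fin n', g (i₀.succAbove j) • a (i₀.succAbove j))
                = - (g i₀ • a i₀) := by
              rw [Fin.sum_univ_succAbove (fun i => g i • a i) i₀] at hg0
              linear_combination (norm := abel) hg0
            rw [e5, smul_neg, smul_smul, inv_mul_cancel₀ hg₀, one_smul]
          rw [hinner]
          rw [TensorProduct.tmul_neg]
          abel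
        obtain ⟨j, hj⟩ := IH n' (by omega) f' a' hsum'
        have hb2 : absK (g (i₀.succAbove j) / g i₀) * v (a' j) ≤ v (a i₀) := by
          rw [habsK_div _ _ hg₀, ha'def]
          simp only
          rw [div_mul_eq_mul_div, div_le_iff₀
            (lt_of_le_of_ne (hK_nonneg _) (fun h => hg₀ ((hK_zero _).1 h.symm)))]
          calc absK (g (i₀.succAbove j)) * v (a (i₀.succAbove j))
              ≤ absK (g i₀) * v (a i₀) := hmax _ (Finset.mem_univ _)
            _ = v (a i₀) * absK (g i₀) := by ring
        have hb1 : absF (f' j) ≤ max (absF (f (i₀.succAbove j)))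
            (absF (f i₀) * absK (g (i₀.succAbove j) / g i₀)) := by
          rw [hf'def]
          simp only
          refine le_trans (habsF_sub _ _) ?_
          rw [hF_mul, hext]
        have hcomb : (1:ℝ) ≤ max (absF (f (i₀.succAbove j)) * v (a' j))
            (absF (f i₀) * v (a i₀)) := by
          calc (1:ℝ) ≤ absF (f' j) * v (a' j) := hj
            _ ≤ max (absF (f (i₀.succAbove j)))
                (absF (f i₀) * absK (g (i₀.succAbove j) / g i₀)) * v (a' j) :=
                mul_le_mul_of_nonneg_right hb1 (hv_nonneg _)
            _ = max (absF (f (i₀.succAbove j)) * v (a' j))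
                (absF (f i₀) * (absK (g (i₀.succAbove j) / g i₀) * v (a' j))) := by
                rw [max_mul_of_nonneg _ _ (hv_nonneg _)]
                ring_nf
            _ ≤ max (absF (f (i₀.succAbove j)) * v (a' j)) (absF (f i₀) * v (a i₀)) := by
                apply max_le_max le_rfl
                exact mul_le_mul_of_nonneg_left hb2 (hF_nonneg _)
        rcases le_max_iff.1 hcomb with h | h
        · exact ⟨i₀.succAbove j, h⟩
        · exact ⟨i₀, h⟩
  -- the tensor seminorm
  set Rep : (F ⊗[K] L) → Set ℝ := fun x => {r | ∃ (n : ℕ) (f : Fin n → F) (a : Fin n → L),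
    x = ∑ i, f i ⊗ₜ[K] a i ∧ r = ∑ i, absF (f i) * v (a i)} with hRepdef
  set P : (F ⊗[K] L) → ℝ := fun x => sInf (Rep x) with hPdef
  have hRep_nonempty : ∀ x, (Rep x).Nonempty := by
    intro x
    obtain ⟨S, hS⟩ := TensorProduct.exists_finset x
    refine ⟨_, S.card, fun i => (S.equivFin.symm i).1.1, fun i => (S.equivFin.symm i).1.2, ?_, rfl⟩
    have h2 := Fintype.sum_equiv S.equivFin.symm
      (fun i : Fin S.card => (S.equivFin.symm i).1.1 ⊗ₜ[K] (S.equivFin.symm i).1.2)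
      (fun z => z.1.1 ⊗ₜ[K] z.1.2) (fun i => rfl)
    rw [hS, ← Finset.sum_attach S (fun z => z.1 ⊗ₜ[K] z.2), ← Finset.univ_eq_attach, ← h2]
  have hRep_nonneg : ∀ x r, r ∈ Rep x → 0 ≤ r := by
    rintro x r ⟨n, f, a, -, rfl⟩
    exact Finset.sum_nonneg fun i _ => mul_nonneg (hF_nonneg _) (hv_nonneg _)
  have hRep_bdd : ∀ x, BddBelow (Rep x) := fun x => ⟨0, fun r hr => hRep_nonneg x r hr⟩
  have hP_le : ∀ x r, r ∈ Rep x → P x ≤ r := fun x r hr => csInf_le (hRep_bdd x) hr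
  have hP_nonneg : ∀ x, 0 ≤ P x := fun x => le_csInf (hRep_nonempty x) (hRep_nonneg x)
  have hP_single : ∀ (f : F) (y : L), P (f ⊗ₜ[K] y) ≤ absF f * v y := by
    intro f y
    apply hP_le
    exact ⟨1, fun _ => f, fun _ => y, by simp, by simp⟩
  have hP0 : P 0 = 0 := le_antisymm
    (hP_le _ _ ⟨0, Fin.elim0, Fin.elim0, by simp, by simp⟩) (hP_nonneg 0)
  have hP_near : ∀ (x) (ε : ℝ), 0 < ε → ∃ r ∈ Rep x, r < P x + ε := by
    intro x ε hε
    exact exists_lt_of_csInf_lt (hRep_nonempty x) (lt_add_of_pos_right _ hε)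
  have hP_add : ∀ x y, P (x + y) ≤ P x + P y := by
    intro x y
    apply le_of_all_eps
    intro ε hε
    obtain ⟨rx, ⟨nx, fx, ax, hx1, hx2⟩, hrx⟩ := hP_near x (ε/2) (by linarith)
    obtain ⟨ry, ⟨ny, fy, ay, hy1, hy2⟩, hry⟩ := hP_near y (ε/2) (by linarith)
    have hmem : (rx + ry) ∈ Rep (x + y) := by
      refine ⟨nx + ny, Fin.append fx fy, Fin.append ax ay, ?_, ?_⟩
      · rw [Fin.sum_univ_add]
        simp only [Fin.append_left, Fin.append_right]
        rw [← hx1, ← hy1]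
      · rw [Fin.sum_univ_add]
        simp only [Fin.append_left, Fin.append_right]
        rw [← hx2, ← hy2]
    calc P (x + y) ≤ rx + ry := hP_le _ _ hmem
      _ ≤ P x + P y + ε := by linarith
  have hP_mul : ∀ x y, P (x * y) ≤ P x * P y := by
    intro x y
    apply le_of_forall_eps_mul (hP_nonneg x) (hP_nonneg y)
    intro ε hε
    obtain ⟨rx, ⟨nx, fx, ax, hx1, hx2⟩, hrx⟩ := hP_near x ε hε
    obtain ⟨ry, ⟨ny, fy, ay, hy1, hy2⟩, hry⟩ := hP_near y ε hε
    have hrx0 : 0 ≤ rx := hRep_nonneg x rx ⟨nx, fx, ax, hx1, hx2⟩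
    have hry0 : 0 ≤ ry := hRep_nonneg y ry ⟨ny, fy, ay, hy1, hy2⟩
    have hmem : (rx * ry) ∈ Rep (x * y) := by
      refine ⟨nx * ny, fun i => fx (finProdFinEquiv.symm i).1 * fy (finProdFinEquiv.symm i).2,
        fun i => ax (finProdFinEquiv.symm i).1 * ay (finProdFinEquiv.symm i).2, ?_, ?_⟩
      · rw [← Fintype.sum_equiv finProdFinEquiv
          (fun z : Fin nx × Fin ny => (fx z.1 * fy z.2) ⊗ₜ[K] (ax z.1 * ay z.2))
          (fun i => (fx (finProdFinEquiv.symm i).1 * fy (finProdFinEquiv.symm i).2) ⊗ₜ[K]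
            (ax (finProdFinEquiv.symm i).1 * ay (finProdFinEquiv.symm i).2))
          (fun z => by simp)]
        rw [Fintype.sum_prod_type]
        rw [hx1, hy1, Finset.sum_mul_sum]
        apply Finset.sum_congr rfl
        intro j _
        apply Finset.sum_congr rfl
        intro k _
        rw [Algebra.TensorProduct.tmul_mul_tmul]
      · rw [← Fintype.sum_equiv finProdFinEquiv
          (fun z : Fin nx × Fin ny => absF (fx z.1 * fy z.2) * v (ax z.1 * ay z.2))
          (fun i => absF (fx (finProdFinEquiv.symm i).1 * fy (finProdFinEquiv.symm i).2) *
            v (ax (finProdFinEquiv.symm i).1 * ay (finProdFinEquiv.symm i).2))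
          (fun z => by simp)]
        rw [Fintype.sum_prod_type]
        rw [hx2, hy2, Finset.sum_mul_sum]
        apply Finset.sum_congr rfl
        intro j _
        apply Finset.sum_congr rfl
        intro k _
        rw [hF_mul, hv_mul]
        ring
    calc P (x * y) ≤ rx * ry := hP_le _ _ hmem
      _ ≤ (P x + ε) * (P y + ε) :=
          mul_le_mul hrx.le hry.le hry0 (by linarith [hP_nonneg x])
  have hP_one : P 1 = 1 := by
    apply le_antisymm
    · have h := hP_single 1 1
      rw [habsF1, hv_one, mul_one] at h
      rw [Algebra.TensorProduct.one_def]
      exact h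
    · apply le_csInf (hRep_nonempty 1)
      rintro r ⟨n, f, a, hsum, rfl⟩
      obtain ⟨i, hi⟩ := helim n f a hsum.symm
      exact le_trans hi (Finset.single_le_sum
        (fun i _ => mul_nonneg (hF_nonneg _) (hv_nonneg _)) (Finset.mem_univ i))
  have hP_nat : ∀ n : ℕ, P ((n : ℕ) : F ⊗[K] L) ≤ 1 := by
    intro n
    have he : ((n : ℕ) : F ⊗[K] L) = ((n : ℕ) : F) ⊗ₜ[K] (1 : L) := by
      rw [show ((n : ℕ) : F ⊗[K] L) = algebraMap F (F ⊗[K] L) ((n : ℕ) : F) from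
        (map_natCast (algebraMap F (F ⊗[K] L)) n).symm]
      rw [Algebra.TensorProduct.algebraMap_apply, Algebra.algebraMap_self, RingHom.id_apply]
    rw [he]
    refine le_trans (hP_single _ _) ?_
    rw [hv_one, mul_one]
    exact habsF_nat n
  -- apply the abstract machinery
  obtain ⟨Q, hQgood, hQmul, hQultra⟩ := exists_mult_good P
    ⟨hP_nonneg, hP_mul, hP_add, hP_one, fun x => le_rfl⟩ hP0 hP_nat
  have hQ0 : Q 0 = 0 := hQgood.zero hP0
  -- exact value on F
  have hQF : ∀ f : F, Q (f ⊗ₜ[K] (1:L)) = absF f := by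
    intro f
    rcases eq_or_ne f 0 with rfl | hf
    · rw [TensorProduct.zero_tmul, hQ0, habsF0]
    · have hfpos : 0 < absF f := lt_of_le_of_ne (hF_nonneg f) (fun h => hf ((hF_zero f).1 h.symm))
      have h1 : Q (f ⊗ₜ[K] (1:L)) ≤ absF f := by
        refine le_trans (hQgood.leP _) ?_
        have := hP_single f 1
        rwa [hv_one, mul_one] at this
      have h2 : Q (f⁻¹ ⊗ₜ[K] (1:L)) ≤ (absF f)⁻¹ := by
        refine le_trans (hQgood.leP _) ?_
        have := hP_single f⁻¹ 1
        rwa [hv_one, mul_one, habsF_inv f hf] at this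
      have h3 : (f ⊗ₜ[K] (1:L)) * (f⁻¹ ⊗ₜ[K] (1:L)) = 1 := by
        rw [Algebra.TensorProduct.tmul_mul_tmul, mul_inv_cancel₀ hf, mul_one,
          ← Algebra.TensorProduct.one_def]
      have h4 : Q (f ⊗ₜ[K] (1:L)) * Q (f⁻¹ ⊗ₜ[K] (1:L)) = 1 := by
        rw [← hQmul, h3, hQgood.one]
      refine le_antisymm h1 ?_
      have h5 : 1 ≤ Q (f ⊗ₜ[K] (1:L)) * (absF f)⁻¹ := by
        rw [← h4]
        exact mul_le_mul_of_nonneg_left h2 (hQgood.nonneg _)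
      have h6 := mul_le_mul_of_nonneg_right h5 hfpos.le
      rwa [one_mul, mul_assoc, inv_mul_cancel₀ (ne_of_gt hfpos), mul_one] at h6
  -- exact value on L
  have hQL : ∀ y : L, Q ((1:F) ⊗ₜ[K] y) = v y := by
    intro y
    rcases eq_or_ne y 0 with rfl | hy
    · rw [TensorProduct.tmul_zero, hQ0, hv0]
    · have hypos : 0 < v y := lt_of_le_of_ne (hv_nonneg y) (fun h => hy ((hv_zero y).1 h.symm))
      have h1 : Q ((1:F) ⊗ₜ[K] y) ≤ v y := by
        refine le_trans (hQgood.leP _) ?_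
        have := hP_single 1 y
        rwa [habsF1, one_mul] at this
      have hvinv : v y⁻¹ = (v y)⁻¹ := by
        have := hv_mul y y⁻¹
        rw [mul_inv_cancel₀ hy, hv_one] at this
        exact (inv_eq_of_mul_eq_one_right this.symm).symm
      have h2 : Q ((1:F) ⊗ₜ[K] y⁻¹) ≤ (v y)⁻¹ := by
        refine le_trans (hQgood.leP _) ?_
        have := hP_single 1 y⁻¹
        rwa [habsF1, one_mul, hvinv] at this
      have h3 : ((1:F) ⊗ₜ[K] y) * ((1:F) ⊗ₜ[K] y⁻¹) = 1 := by
        rw [Algebra.TensorProduct.tmul_mul_tmul, mul_inv_cancel₀ hy, mul_one,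
          ← Algebra.TensorProduct.one_def]
      have h4 : Q ((1:F) ⊗ₜ[K] y) * Q ((1:F) ⊗ₜ[K] y⁻¹) = 1 := by
        rw [← hQmul, h3, hQgood.one]
      refine le_antisymm h1 ?_
      have h5 : 1 ≤ Q ((1:F) ⊗ₜ[K] y) * (v y)⁻¹ := by
        rw [← h4]
        exact mul_le_mul_of_nonneg_left h2 (hQgood.nonneg _)
      have h6 := mul_le_mul_of_nonneg_right h5 hypos.le
      rwa [one_mul, mul_assoc, inv_mul_cancel₀ (ne_of_gt hypos), mul_one] at h6
  exact ⟨Q, hQgood.nonneg, hQmul, hQultra, hQF, hQL⟩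

end TensorPart
section Assemble

/-- A multiplicative seminorm on the `K`-algebra `A` extending the absolute value `abs`. -/
def IsMultSeminorm {K A : Type*} [Field K] [CommRing A] [Algebra K A]
    (abs : K → ℝ) (p : A → ℝ) : Prop :=
  (∀ f, 0 ≤ p f) ∧
  (∀ f g, p (f * g) = p f * p g) ∧
  (∀ f g, p (f + g) ≤ max (p f) (p g)) ∧
  (∀ α : K, p (algebraMap K A α) = abs α)

set_option maxHeartbeats 2000000 in
theorem surj_core {K F A : Type*} [Field K] [Field F] [Algebra K F]
    [CommRing A] [Algebra K A]
    (absK : K → ℝ) (absF : F → ℝ)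
    (hK_nonneg : ∀ α, 0 ≤ absK α) (hK_zero : ∀ α : K, absK α = 0 ↔ α = 0)
    (hK_mul : ∀ α β, absK (α * β) = absK α * absK β)
    (hF_nonneg : ∀ α, 0 ≤ absF α) (hF_zero : ∀ α : F, absF α = 0 ↔ α = 0)
    (hF_mul : ∀ α β, absF (α * β) = absF α * absF β)
    (hF_add : ∀ α β, absF (α + β) ≤ max (absF α) (absF β))
    (hext : ∀ α : K, absF (algebraMap K F α) = absK α)
    (q : A → ℝ) (hq : IsMultSeminorm absK q) :
    ∃ p : (F ⊗[K] A) → ℝ, IsMultSeminorm absF p ∧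
      ∀ a : A, p (Algebra.TensorProduct.includeRight a) = q a := by
  classical
  obtain ⟨hq0, hqm, hqa, hqalg⟩ := hq
  have habsK1 : absK 1 = 1 := by
    have h := hK_mul 1 1
    rw [mul_one] at h
    have h0 : absK 1 ≠ 0 := fun h' => one_ne_zero ((hK_zero 1).1 h')
    have : absK 1 * absK 1 = absK 1 * 1 := by rw [mul_one]; exact h.symm
    exact (mul_left_cancel₀ h0 this)
  have habsK0 : absK 0 = 0 := (hK_zero 0).2 rfl
  have hq1 : q 1 = 1 := by
    have := hqalg 1
    rwa [map_one, habsK1] at this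
  have hqzero : q 0 = 0 := by
    have := hqalg 0
    rwa [map_zero, habsK0] at this
  have habsKneg1 : absK (-1 : K) = 1 := by
    have h := hK_mul (-1) (-1)
    rw [neg_one_mul, neg_neg, habsK1] at h
    have h0 : 0 ≤ absK (-1 : K) := hK_nonneg _
    nlinarith
  have hq_neg : ∀ a : A, q (-a) = q a := by
    intro a
    have : (-a : A) = algebraMap K A (-1) * a := by
      rw [map_neg, map_one, neg_one_mul]
    rw [this, hqm, hqalg, habsKneg1, one_mul]
  -- the kernel ideal
  set I : Ideal A := {
    carrier := {a | q a = 0}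
    add_mem' := by
      intro a b ha hb
      simp only [Set.mem_setOf_eq] at ha hb ⊢
      have h := hqa a b
      rw [ha, hb, max_self] at h
      exact le_antisymm h (hq0 _)
    zero_mem' := by
      simp only [Set.mem_setOf_eq]
      exact hqzero
    smul_mem' := by
      intro c x hx
      simp only [Set.mem_setOf_eq] at hx ⊢
      rw [smul_eq_mul, hqm, hx, mul_zero] } with hIdef
  have hmemI : ∀ a : A, a ∈ I ↔ q a = 0 := fun a => Iff.rfl
  haveI hIP : I.IsPrime := by
    constructor
    · intro h
      rw [Ideal.eq_top_iff_one] at h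
      rw [hmemI, hq1] at h
      exact one_ne_zero h
    · intro a b hab
      rw [hmemI] at hab ⊢
      rw [hmemI]
      rw [hqm] at hab
      rcases mul_eq_zero.1 hab with h | h
      · exact Or.inl h
      · exact Or.inr h
  haveI : IsDomain (A ⧸ I) := Ideal.Quotient.isDomain I
  -- the residue field with its absolute value
  have hmks : Function.Surjective (Ideal.Quotient.mk I) := Ideal.Quotient.mk_surjective
  have hq_congr : ∀ a b : A, Ideal.Quotient.mk I a = Ideal.Quotient.mk I b → q a = q b := by
    intro a b h
    have hab : q (a - b) = 0 := (hmemI _).1 (Ideal.Quotient.eq.1 h)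
    have h1 : q a ≤ q b := by
      have := hqa b (a - b)
      rw [show b + (a - b) = a from by ring, hab, max_eq_left (hq0 b)] at this
      exact this
    have h2 : q b ≤ q a := by
      have := hqa a (b - a)
      rw [show a + (b - a) = b from by ring, show (b - a : A) = -(a - b) from by ring,
        hq_neg, hab, max_eq_left (hq0 a)] at this
      exact this
    exact le_antisymm h1 h2
  set qb : A ⧸ I → ℝ := fun y => q (Function.surjInv hmks y) with hqbdef
  have hqb_mk : ∀ a : A, qb (Ideal.Quotient.mk I a) = q a := by
    intro a
    exact hq_congr _ _ (Function.surjInv_eq hmks _)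
  have hqb_nonneg : ∀ y, 0 ≤ qb y := fun y => hq0 _
  have hqb_mul : ∀ y z, qb (y * z) = qb y * qb z := by
    intro y z
    obtain ⟨a, rfl⟩ := hmks y
    obtain ⟨b, rfl⟩ := hmks z
    rw [← map_mul, hqb_mk, hqb_mk, hqb_mk, hqm]
  have hqb_add : ∀ y z, qb (y + z) ≤ max (qb y) (qb z) := by
    intro y z
    obtain ⟨a, rfl⟩ := hmks y
    obtain ⟨b, rfl⟩ := hmks z
    rw [← map_add, hqb_mk, hqb_mk, hqb_mk]
    exact hqa a b
  have hqb_zero : ∀ y, qb y = 0 ↔ y = 0 := by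
    intro y
    obtain ⟨a, rfl⟩ := hmks y
    rw [hqb_mk]
    constructor
    · intro h
      exact Ideal.Quotient.eq_zero_iff_mem.2 ((hmemI a).2 h)
    · intro h
      exact (hmemI a).1 (Ideal.Quotient.eq_zero_iff_mem.1 h)
  have hqb_one : qb 1 = 1 := by
    rw [show (1 : A ⧸ I) = Ideal.Quotient.mk I 1 from (map_one _).symm, hqb_mk, hq1]
  have hqb_alg : ∀ α : K, qb (algebraMap K (A ⧸ I) α) = absK α := by
    intro α
    rw [IsScalarTower.algebraMap_apply K A (A ⧸ I), Ideal.Quotient.algebraMap_eq, hqb_mk, hqalg]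
  -- the fraction field
  set L := FractionRing (A ⧸ I) with hLdef
  have hInj : Function.Injective (algebraMap (A ⧸ I) L) := IsFractionRing.injective _ _
  have hsne : ∀ s : (nonZeroDivisors (A ⧸ I)), (s : A ⧸ I) ≠ 0 := fun s =>
    mem_nonZeroDivisors_iff_ne_zero.1 s.2
  set v : L → ℝ := fun x => qb (IsLocalization.sec (nonZeroDivisors (A ⧸ I)) x).1 /
    qb ((IsLocalization.sec (nonZeroDivisors (A ⧸ I)) x).2 : A ⧸ I) with hvdef
  have hv_spec : ∀ (x : L) (a s : A ⧸ I), s ≠ 0 →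
      x * algebraMap (A ⧸ I) L s = algebraMap (A ⧸ I) L a → v x = qb a / qb s := by
    intro x a s hs hx
    have hsec := IsLocalization.sec_spec (nonZeroDivisors (A ⧸ I)) x
    set a₀ := (IsLocalization.sec (nonZeroDivisors (A ⧸ I)) x).1 with ha₀
    set s₀ := ((IsLocalization.sec (nonZeroDivisors (A ⧸ I)) x).2 : A ⧸ I) with hs₀
    have hs₀ne : s₀ ≠ 0 := hsne _
    have hcross : a * s₀ = a₀ * s := by
      apply hInj
      rw [map_mul, map_mul, ← hx, ← hsec]
      ring
    have hqeq : qb a * qb s₀ = qb a₀ * qb s := by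
      rw [← hqb_mul, ← hqb_mul, hcross]
    have hqs : qb s ≠ 0 := fun h => hs ((hqb_zero s).1 h)
    have hqs₀ : qb s₀ ≠ 0 := fun h => hs₀ne ((hqb_zero s₀).1 h)
    rw [hvdef]
    simp only [← ha₀, ← hs₀]
    rw [div_eq_div_iff hqs₀ hqs]
    linarith [hqeq]
  have hv_alg : ∀ y : A ⧸ I, v (algebraMap (A ⧸ I) L y) = qb y := by
    intro y
    rw [hv_spec _ y 1 one_ne_zero (by rw [map_one, mul_one]), hqb_one, div_one]
  have hv_nonneg : ∀ x, 0 ≤ v x := fun x => div_nonneg (hqb_nonneg _) (hqb_nonneg _)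
  have hv_zero : ∀ x : L, v x = 0 ↔ x = 0 := by
    intro x
    have hsec := IsLocalization.sec_spec (nonZeroDivisors (A ⧸ I)) x
    set a₀ := (IsLocalization.sec (nonZeroDivisors (A ⧸ I)) x).1 with ha₀
    set s₀ := ((IsLocalization.sec (nonZeroDivisors (A ⧸ I)) x).2 : A ⧸ I) with hs₀
    have hs₀ne : s₀ ≠ 0 := hsne _
    have hqs₀ : qb s₀ ≠ 0 := fun h => hs₀ne ((hqb_zero s₀).1 h)
    have hvx : v x = qb a₀ / qb s₀ := rfl
    constructor
    · intro h
      rw [hvx, div_eq_zero_iff] at h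
      rcases h with h | h
      · have ha0 : a₀ = 0 := (hqb_zero a₀).1 h
        have : x * algebraMap (A ⧸ I) L s₀ = 0 := by
          rw [hsec, ha0, map_zero]
        have hs₀L : algebraMap (A ⧸ I) L s₀ ≠ 0 := fun hc =>
          hs₀ne (hInj (by rw [hc, map_zero]))
        rcases mul_eq_zero.1 this with h' | h'
        · exact h'
        · exact absurd h' hs₀L
      · exact absurd h hqs₀
    · intro h
      rw [h] at hsec
      rw [zero_mul] at hsec
      have : a₀ = 0 := hInj (by rw [← hsec, map_zero])
      rw [hvx, this, (hqb_zero 0).2 rfl, zero_div]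
  have hv_mul : ∀ x y : L, v (x * y) = v x * v y := by
    intro x y
    have hxs := IsLocalization.sec_spec (nonZeroDivisors (A ⧸ I)) x
    have hys := IsLocalization.sec_spec (nonZeroDivisors (A ⧸ I)) y
    set ax := (IsLocalization.sec (nonZeroDivisors (A ⧸ I)) x).1
    set sx := ((IsLocalization.sec (nonZeroDivisors (A ⧸ I)) x).2 : A ⧸ I)
    set ay := (IsLocalization.sec (nonZeroDivisors (A ⧸ I)) y).1
    set sy := ((IsLocalization.sec (nonZeroDivisors (A ⧸ I)) y).2 : A ⧸ I)
    have hsx : sx ≠ 0 := hsne _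
    have hsy : sy ≠ 0 := hsne _
    have hmul : (x * y) * algebraMap (A ⧸ I) L (sx * sy) = algebraMap (A ⧸ I) L (ax * ay) := by
      rw [map_mul, map_mul]
      calc x * y * (algebraMap (A ⧸ I) L sx * algebraMap (A ⧸ I) L sy)
          = (x * algebraMap (A ⧸ I) L sx) * (y * algebraMap (A ⧸ I) L sy) := by ring
        _ = algebraMap (A ⧸ I) L ax * algebraMap (A ⧸ I) L ay := by rw [hxs, hys]
    rw [hv_spec _ _ _ (mul_ne_zero hsx hsy) hmul, hqb_mul, hqb_mul]
    have hvx : v x = qb ax / qb sx := rfl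
    have hvy : v y = qb ay / qb sy := rfl
    rw [hvx, hvy, div_mul_div_comm]
  have hv_add : ∀ x y : L, v (x + y) ≤ max (v x) (v y) := by
    intro x y
    have hxs := IsLocalization.sec_spec (nonZeroDivisors (A ⧸ I)) x
    have hys := IsLocalization.sec_spec (nonZeroDivisors (A ⧸ I)) y
    set ax := (IsLocalization.sec (nonZeroDivisors (A ⧸ I)) x).1
    set sx := ((IsLocalization.sec (nonZeroDivisors (A ⧸ I)) x).2 : A ⧸ I)
    set ay := (IsLocalization.sec (nonZeroDivisors (A ⧸ I)) y).1
    set sy := ((IsLocalization.sec (nonZeroDivisors (A ⧸ I)) y).2 : A ⧸ I)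
    have hsx : sx ≠ 0 := hsne _
    have hsy : sy ≠ 0 := hsne _
    have hqsx : 0 < qb sx := lt_of_le_of_ne (hqb_nonneg _) (fun h => hsx ((hqb_zero _).1 h.symm))
    have hqsy : 0 < qb sy := lt_of_le_of_ne (hqb_nonneg _) (fun h => hsy ((hqb_zero _).1 h.symm))
    have hadd : (x + y) * algebraMap (A ⧸ I) L (sx * sy)
        = algebraMap (A ⧸ I) L (ax * sy + ay * sx) := by
      rw [map_mul, map_add, map_mul, map_mul]
      calc (x + y) * (algebraMap (A ⧸ I) L sx * algebraMap (A ⧸ I) L sy)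
          = (x * algebraMap (A ⧸ I) L sx) * algebraMap (A ⧸ I) L sy
            + (y * algebraMap (A ⧸ I) L sy) * algebraMap (A ⧸ I) L sx := by ring
        _ = _ := by rw [hxs, hys]
    rw [hv_spec _ _ _ (mul_ne_zero hsx hsy) hadd]
    have hvx : v x = qb ax / qb sx := rfl
    have hvy : v y = qb ay / qb sy := rfl
    have hnum : qb (ax * sy + ay * sx) ≤ max (qb ax * qb sy) (qb ay * qb sx) := by
      have := hqb_add (ax * sy) (ay * sx)
      rwa [hqb_mul, hqb_mul] at this
    have hden : 0 < qb (sx * sy) := by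
      rw [hqb_mul]
      exact mul_pos hqsx hqsy
    rw [div_le_iff₀ hden, hvx, hvy]
    rw [hqb_mul]
    refine le_trans hnum ?_
    rw [max_mul_of_nonneg _ _ (le_of_lt (mul_pos hqsx hqsy))]
    apply max_le_max
    · rw [div_mul_eq_mul_div, le_div_iff₀ hqsx]
      ring_nf
      exact le_refl _
    · rw [div_mul_eq_mul_div, le_div_iff₀ hqsy]
      ring_nf
      exact le_refl _
  have hv_algK : ∀ α : K, v (algebraMap K L α) = absK α := by
    intro α
    rw [IsScalarTower.algebraMap_apply K (A ⧸ I) L, hv_alg, hqb_alg]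
  -- apply the tensor construction
  obtain ⟨Q, hQ_nonneg, hQ_mul, hQ_ultra, hQF, hQL⟩ := tensor_exists absK absF v
    hK_nonneg hK_zero hK_mul hF_nonneg hF_zero hF_mul hF_add hext
    hv_nonneg hv_zero hv_mul hv_add hv_algK
  -- transport along F ⊗ A → F ⊗ L
  set ψ : A →ₐ[K] L := (IsScalarTower.toAlgHom K (A ⧸ I) L).comp (Ideal.Quotient.mkₐ K I)
    with hψdef
  set Φ : F ⊗[K] A →ₐ[K] F ⊗[K] L := Algebra.TensorProduct.map (AlgHom.id K F) ψ with hΦdef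
  refine ⟨fun x => Q (Φ x), ⟨?_, ?_, ?_, ?_⟩, ?_⟩
  · intro x
    exact hQ_nonneg _
  · intro x y
    show Q (Φ (x * y)) = Q (Φ x) * Q (Φ y)
    rw [map_mul, hQ_mul]
  · intro x y
    show Q (Φ (x + y)) ≤ max (Q (Φ x)) (Q (Φ y))
    rw [map_add]
    exact hQ_ultra _ _
  · intro α
    show Q (Φ (algebraMap F (F ⊗[K] A) α)) = absF α
    have h1 : algebraMap F (F ⊗[K] A) α = α ⊗ₜ[K] (1 : A) := by
      rw [Algebra.TensorProduct.algebraMap_apply, Algebra.algebraMap_self, RingHom.id_apply]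
    rw [h1]
    have h2 : Φ (α ⊗ₜ[K] (1 : A)) = α ⊗ₜ[K] (1 : L) := by
      rw [hΦdef]
      rw [Algebra.TensorProduct.map_tmul, map_one]
      simp only [AlgHom.coe_id, id_eq]
    rw [h2]
    exact hQF α
  · intro a
    show Q (Φ (Algebra.TensorProduct.includeRight (a : A))) = q a
    have h1 : (Algebra.TensorProduct.includeRight (a : A) : F ⊗[K] A) = (1:F) ⊗ₜ[K] a :=
      rfl
    have h2 : Φ ((1:F) ⊗ₜ[K] a) = (1:F) ⊗ₜ[K] (ψ a) := by
      rw [hΦdef]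
      rw [Algebra.TensorProduct.map_tmul]
      simp only [AlgHom.coe_id, id_eq]
    rw [h1, h2]
    have h3 : ψ a = algebraMap (A ⧸ I) L (Ideal.Quotient.mk I a) := rfl
    rw [h3, hQL, hv_alg, hqb_mk]

end Assemble

/-- Let `X = Spec A` be affine of finite type over `K` and let `(F, abs_F)` be a complete
valued field extending `(K, abs_K)`.  Then the restriction of seminorms along
`A → F ⊗[K] A` gives a continuous surjective map `(X_F)^an → X^an` (both spaces carry the
topology of pointwise convergence). -/
theorem stmt10 {K F A : Type*} [Field K] [Field F] [Algebra K F]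
    [CommRing A] [Algebra K A]
    (hA : Algebra.FiniteType K A)
    (absK : K → ℝ) (absF : F → ℝ)
    (hK_nonneg : ∀ α, 0 ≤ absK α) (hK_zero : ∀ α, absK α = 0 ↔ α = 0)
    (hK_mul : ∀ α β, absK (α * β) = absK α * absK β)
    (hK_add : ∀ α β, absK (α + β) ≤ max (absK α) (absK β))
    (hF_nonneg : ∀ α, 0 ≤ absF α) (hF_zero : ∀ α, absF α = 0 ↔ α = 0)
    (hF_mul : ∀ α β, absF (α * β) = absF α * absF β)
    (hF_add : ∀ α β, absF (α + β) ≤ max (absF α) (absF β))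
    (hext : ∀ α : K, absF (algebraMap K F α) = absK α)
    -- completeness of F with respect to abs_F
    (hcomplete : ∀ s : ℕ → F,
      (∀ ε : ℝ, 0 < ε → ∃ N : ℕ, ∀ m ≥ N, ∀ k ≥ N, absF (s m - s k) < ε) →
      ∃ a : F, ∀ ε : ℝ, 0 < ε → ∃ N : ℕ, ∀ m ≥ N, absF (s m - a) < ε) :
    Continuous (fun (p : (F ⊗[K] A) → ℝ) =>
        (fun a : A => p (Algebra.TensorProduct.includeRight a)) : ((F ⊗[K] A) → ℝ) → (A → ℝ)) ∧
    Set.MapsTo (fun (p : (F ⊗[K] A) → ℝ) => fun a : A => p (Algebra.TensorProduct.includeRight a))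
      {p | IsMultSeminorm absF p} {q | IsMultSeminorm absK q} ∧
    Set.SurjOn (fun (p : (F ⊗[K] A) → ℝ) => fun a : A => p (Algebra.TensorProduct.includeRight a))
      {p | IsMultSeminorm absF p} {q | IsMultSeminorm absK q} := by
  refine ⟨?_, ?_, ?_⟩
  · -- continuity
    apply continuous_pi
    intro a
    exact continuous_apply _
  · -- maps to
    rintro p ⟨hp0, hpm, hpa, hpalg⟩
    refine ⟨fun a => hp0 _, ?_, ?_, ?_⟩
    · intro a b
      show p (Algebra.TensorProduct.includeRight (a * b))
        = p (Algebra.TensorProduct.includeRight a) * p (Algebra.TensorProduct.includeRight b)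
      rw [map_mul, hpm]
    · intro a b
      show p (Algebra.TensorProduct.includeRight (a + b))
        ≤ max (p (Algebra.TensorProduct.includeRight a)) (p (Algebra.TensorProduct.includeRight b))
      rw [map_add]
      exact hpa _ _
    · intro α
      show p (Algebra.TensorProduct.includeRight (algebraMap K A α)) = absK α
      have h1 : (Algebra.TensorProduct.includeRight (algebraMap K A α) : F ⊗[K] A)
          = algebraMap F (F ⊗[K] A) (algebraMap K F α) := by
        rw [AlgHom.commutes, ← IsScalarTower.algebraMap_apply]
      rw [h1, hpalg, hext]
  · -- surjectivity
    rintro q hq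
    obtain ⟨p, hp, hrest⟩ := surj_core absK absF hK_nonneg hK_zero hK_mul
      hF_nonneg hF_zero hF_mul hF_add hext q hq
    exact ⟨p, hp, funext fun a => hrest a⟩
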